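/- (Lemme 7) Let k be a finite field of odd characteristic, let α ∈ k be a non-square, and let δ₁, δ₂ ∈ k be nonzero elements with δ₁² ≠ δ₂². Then there exist nonzero ξ, η, ζ ∈ k such that α·ξ² − δ₁² = η² and α·ξ² − δ₂² = α·ζ². -/

import Mathlib

open Finset

section Aux

variable {k : Type*} [Field k] [Fintype k]

private lemma ns_mul_ns (hchar : ringChar k ≠ 2) {a b : k} (ha : ¬ IsSquare a)
    (hb : ¬ IsSquare b) : IsSquare (a * b) := by
  classical
  have ha0 : a ≠ 0 := fun h => ha (h ▸ IsSquare.zero)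
  have hb0 : b ≠ 0 := fun h => hb (h ▸ IsSquare.zero)
  have h1 : quadraticChar k a = -1 := quadraticChar_neg_one_iff_not_isSquare.mpr ha
  have h2 : quadraticChar k b = -1 := quadraticChar_neg_one_iff_not_isSquare.mpr hb
  have : quadraticChar k (a * b) = 1 := by rw [map_mul, h1, h2]; ring
  exact (quadraticChar_one_iff_isSquare (mul_ne_zero ha0 hb0)).mp this

private lemma ns_div (hα : ¬ IsSquare (α : k)) {δ : k} (hδ : δ ≠ 0) :
    ¬ IsSquare (δ ^ 2 / α) := by
  intro ⟨r, hr⟩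
  have hα0 : α ≠ 0 := fun h => hα (h ▸ IsSquare.zero)
  have hr0 : r ≠ 0 := by
    intro h; rw [h, mul_zero] at hr
    exact hδ (by simpa [hα0] using (div_eq_zero_iff.mp hr))
  apply hα ⟨δ / r, ?_⟩
  field_simp at hr ⊢
  rw [hr, mul_comm]

/-- Core combinatorial lemma: for two distinct nonsquares `β₁ β₂` whose ratio is a square,
there is `ξ ≠ 0` with `ξ² - β₁` a nonsquare and `ξ² - β₂` a square. -/
private lemma core (hchar : ringChar k ≠ 2) {β₁ β₂ : k} (h₁ : ¬ IsSquare β₁)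
    (h₂ : ¬ IsSquare β₂) (hne : β₁ ≠ β₂) :
    ∃ ξ : k, ξ ≠ 0 ∧ ¬ IsSquare (ξ ^ 2 - β₁) ∧ IsSquare (ξ ^ 2 - β₂) := by
  classical
  by_contra hcon
  push_neg at hcon
  -- ratio β₂/β₁ is a square (nonsquare * nonsquare⁻¹)
  have hb10 : β₁ ≠ 0 := fun h => h₁ (h ▸ IsSquare.zero)
  have hb20 : β₂ ≠ 0 := fun h => h₂ (h ▸ IsSquare.zero)
  have hinv1 : ¬ IsSquare β₁⁻¹ := by
    intro ⟨r, hr⟩; exact h₁ ⟨r⁻¹, by rw [← mul_inv, ← hr, inv_inv]⟩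
  have hratio : IsSquare (β₂ * β₁⁻¹) := ns_mul_ns hchar h₂ hinv1
  obtain ⟨lam, hlam⟩ := hratio
  have hlam0 : lam ≠ 0 := by
    intro h; rw [h, mul_zero] at hlam
    exact (mul_ne_zero hb20 (inv_ne_zero hb10)) hlam
  -- sub-fact: βᵢ is never of the form square - βᵢ related: ξ² - βᵢ ≠ 0
  have hnz : ∀ (ξ : k) (β : k), ¬ IsSquare β → ξ ^ 2 - β ≠ 0 := by
    intro ξ β hβ h
    exact hβ ⟨ξ, by rw [← sq]; linear_combination -h⟩
  -- the two filter sets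
  set W₁ : Finset k := univ.filter (fun ξ => IsSquare (ξ ^ 2 - β₁)) with hW₁
  set W₂ : Finset k := univ.filter (fun ξ => IsSquare (ξ ^ 2 - β₂)) with hW₂
  -- W₂ ⊆ W₁
  have hsub : W₂ ⊆ W₁ := by
    intro ξ hx
    rw [hW₂, mem_filter] at hx
    rw [hW₁, mem_filter]
    refine ⟨mem_univ _, ?_⟩
    by_cases hx0 : ξ = 0
    · -- IsSquare (-β₂) → IsSquare (-β₁) : -β₁ = (-β₂) * (β₁/β₂) with β₁/β₂ square
      subst hx0
      have h2sq : IsSquare (-β₂) := by simpa using hx.2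
      obtain ⟨r, hr⟩ := h2sq
      -- β₁ * β₂⁻¹ is a square
      have hinv2 : ¬ IsSquare β₂⁻¹ := by
        intro ⟨s, hs⟩; exact h₂ ⟨s⁻¹, by rw [← mul_inv, ← hs, inv_inv]⟩
      obtain ⟨mu, hmu⟩ := ns_mul_ns hchar h₁ hinv2
      refine (isSquare_iff_exists_sq _).mpr ⟨r * mu, ?_⟩
      have : -β₁ = (-β₂) * (β₁ * β₂⁻¹) := by field_simp
      rw [zero_pow (by norm_num), zero_sub, this, hr, hmu, sq]; ring
    · by_contra hns1
      exact (hcon ξ hx0 hns1) hx.2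
  -- card W₁ ≤ card W₂ via scaling bijection ξ ↦ lam * ξ
  have hcard : W₁.card ≤ W₂.card := by
    apply Finset.card_le_card_of_injOn (fun ξ => lam * ξ)
    · intro ξ hx
      rw [hW₁, mem_coe, mem_filter] at hx
      rw [hW₂, mem_coe, mem_filter]
      refine ⟨mem_univ _, ?_⟩
      obtain ⟨r, hr⟩ := hx.2
      refine ⟨lam * r, ?_⟩
      have hβ₂ : β₂ = lam * lam * β₁ := by
        field_simp at hlam; linear_combination hlam
      rw [hβ₂]; ring_nf; linear_combination (lam^2) * hr
    · intro a _ b _ h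
      exact mul_left_cancel₀ hlam0 h
  have hWeq : W₁ = W₂ := (Finset.eq_of_subset_of_card_le hsub hcard).symm
  -- hence for all ξ : IsSquare (ξ²-β₁) ↔ IsSquare (ξ²-β₂)
  have hiff : ∀ ξ : k, IsSquare (ξ ^ 2 - β₁) ↔ IsSquare (ξ ^ 2 - β₂) := by
    intro ξ
    constructor
    · intro h
      have : ξ ∈ W₁ := by rw [hW₁, mem_filter]; exact ⟨mem_univ _, h⟩
      rw [hWeq, hW₂, mem_filter] at this; exact this.2
    · intro h
      have : ξ ∈ W₂ := by rw [hW₂, mem_filter]; exact ⟨mem_univ _, h⟩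
      rw [← hWeq, hW₁, mem_filter] at this; exact this.2
  -- Möbius trick: s ↦ (s - β₁)/(s - β₂) maps squares injectively into squares \ {0,1}
  set Q : Finset k := univ.filter (fun s => IsSquare s) with hQ
  have h0Q : (0 : k) ∈ Q := by rw [hQ, mem_filter]; exact ⟨mem_univ _, IsSquare.zero⟩
  have h1Q : (1 : k) ∈ Q := by rw [hQ, mem_filter]; exact ⟨mem_univ _, IsSquare.one⟩
  have hden : ∀ s ∈ Q, s - β₂ ≠ 0 := by
    intro s hs h
    rw [hQ, mem_filter] at hs
    rw [sub_eq_zero] at h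
    exact h₂ (h ▸ hs.2)
  have hnum : ∀ s ∈ Q, s - β₁ ≠ 0 := by
    intro s hs h
    rw [hQ, mem_filter] at hs
    rw [sub_eq_zero] at h
    exact h₁ (h ▸ hs.2)
  set μ : k → k := fun s => (s - β₁) / (s - β₂) with hμ
  have himg : ∀ s ∈ Q, μ s ∈ (Q.erase 0).erase 1 := by
    intro s hs
    have hd := hden s hs
    have hn := hnum s hs
    have hμs : IsSquare (μ s) := by
      rw [hQ, mem_filter] at hs
      obtain ⟨r, hr⟩ := hs.2
      have hr2 : s = r ^ 2 := by rw [hr, sq]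
      by_cases hc : IsSquare (s - β₁)
      · -- both squares
        have hc2 : IsSquare (s - β₂) := by
          rw [hr2] at hc ⊢; exact (hiff r).mp hc
        obtain ⟨u, hu⟩ := hc
        obtain ⟨v, hv⟩ := hc2
        have hv0 : v ≠ 0 := by intro h; rw [h, mul_zero] at hv; exact hd hv
        refine ⟨u / v, ?_⟩
        show (s - β₁) / (s - β₂) = u / v * (u / v)
        rw [hu, hv, div_mul_div_comm]
      · -- both nonsquares
        have hc2 : ¬ IsSquare (s - β₂) := by
          rw [hr2] at hc ⊢; exact fun h => hc ((hiff r).mpr h)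
        obtain ⟨w, hw⟩ := ns_mul_ns hchar hc hc2
        refine ⟨w / (s - β₂), ?_⟩
        show (s - β₁) / (s - β₂) = w / (s - β₂) * (w / (s - β₂))
        rw [div_mul_div_comm, div_eq_div_iff hd (mul_ne_zero hd hd)]
        linear_combination (s - β₂) * hw
    have hne1 : μ s ≠ 1 := by
      rw [hμ]; intro h
      rw [div_eq_one_iff_eq hd] at h
      exact hne (by linear_combination -h)
    have hne0 : μ s ≠ 0 := by
      rw [hμ]; intro h
      exact hn (by rwa [div_eq_zero_iff, or_iff_left hd] at h)
    refine Finset.mem_erase.mpr ⟨hne1, Finset.mem_erase.mpr ⟨hne0, ?_⟩⟩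
    rw [hQ, mem_filter]; exact ⟨mem_univ _, hμs⟩
  have hinj : Set.InjOn μ Q := by
    intro s hs t ht h
    have hds := hden s hs
    have hdt := hden t ht
    simp only [hμ] at h
    rw [div_eq_div_iff hds hdt] at h
    have : (β₁ - β₂) * s = (β₁ - β₂) * t := by linear_combination h
    exact mul_left_cancel₀ (sub_ne_zero.mpr hne) this
  have hcard2 : Q.card ≤ ((Q.erase 0).erase 1).card :=
    Finset.card_le_card_of_injOn μ himg hinj
  have h1mem : (1 : k) ∈ Q.erase 0 := Finset.mem_erase.mpr ⟨one_ne_zero, h1Q⟩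
  rw [Finset.card_erase_of_mem h1mem, Finset.card_erase_of_mem h0Q] at hcard2
  have hge : 2 ≤ Q.card := by
    have : ({0, 1} : Finset k) ⊆ Q := by
      intro x hx
      rcases Finset.mem_insert.mp hx with h | h
      · rwa [h]
      · rw [Finset.mem_singleton.mp h]; exact h1Q
    calc 2 = ({0, 1} : Finset k).card := by simp
    _ ≤ Q.card := Finset.card_le_card this
  omega

end Aux

/-- (Lemme 7) Over a finite field of odd characteristic, with `α` a non-square and
`δ₁, δ₂` nonzero with `δ₁² ≠ δ₂²`, there exist nonzero `ξ, η, ζ` with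
`α·ξ² − δ₁² = η²` and `α·ξ² − δ₂² = α·ζ²`. -/
theorem lemme7 {k : Type*} [Field k] [Fintype k] (hchar : ringChar k ≠ 2)
    (α : k) (hα : ¬ IsSquare α) (δ₁ δ₂ : k) (hδ₁ : δ₁ ≠ 0) (hδ₂ : δ₂ ≠ 0)
    (hne : δ₁ ^ 2 ≠ δ₂ ^ 2) :
    ∃ ξ η ζ : k, ξ ≠ 0 ∧ η ≠ 0 ∧ ζ ≠ 0 ∧
      α * ξ ^ 2 - δ₁ ^ 2 = η ^ 2 ∧ α * ξ ^ 2 - δ₂ ^ 2 = α * ζ ^ 2 := by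
  have hα0 : α ≠ 0 := fun h => hα (h ▸ IsSquare.zero)
  set β₁ : k := δ₁ ^ 2 / α with hβ₁
  set β₂ : k := δ₂ ^ 2 / α with hβ₂
  have h₁ : ¬ IsSquare β₁ := ns_div hα hδ₁
  have h₂ : ¬ IsSquare β₂ := ns_div hα hδ₂
  have hbne : β₁ ≠ β₂ := by
    rw [hβ₁, hβ₂]; intro h
    exact hne (by field_simp at h; exact h)
  obtain ⟨ξ, hξ0, hns1, hsq2⟩ := core hchar h₁ h₂ hbne
  -- η : α * (ξ² - β₁) is a product of two nonsquares, hence a square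
  obtain ⟨η, hη⟩ := ns_mul_ns hchar hα hns1
  have hval1 : ξ ^ 2 - β₁ ≠ 0 := fun h => h₁ ⟨ξ, by rw [← sq]; linear_combination -h⟩
  have hη0 : η ≠ 0 := by
    intro h; rw [h, mul_zero] at hη
    exact (mul_ne_zero hα0 hval1) hη
  obtain ⟨ζ, hζ⟩ := hsq2
  have hval2 : ξ ^ 2 - β₂ ≠ 0 := fun h => h₂ ⟨ξ, by rw [← sq]; linear_combination -h⟩
  have hζ0 : ζ ≠ 0 := by
    intro h; rw [h, mul_zero] at hζ
    exact hval2 hζ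
  refine ⟨ξ, η, ζ, hξ0, hη0, hζ0, ?_, ?_⟩
  · have h' : α * ξ ^ 2 - δ₁ ^ 2 = α * (ξ ^ 2 - β₁) := by
      rw [hβ₁]; field_simp
    rw [h', hη]; ring
  · have h' : α * ξ ^ 2 - δ₂ ^ 2 = α * (ξ ^ 2 - β₂) := by
      rw [hβ₂]; field_simp
    rw [h', hζ]; ring
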